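/- Let n ≥ 6 be an integer. There exists a unique φ ∈ (π/4, π/2) with cos φ = ((2n−11)·√(2n−3))/((2n−5)·√(5(n−3))) and sin φ = ((2n−1)·√(3(n−4)))/((2n−5)·√(5(n−3))). With this φ, the three real roots of the cubic g₃(t) := 8(2n−1)(2n−3)(2n−5)·t³ + 12(n−3)(2n−3)(2n−5)·t² + 6(n−3)(n−4)(2n−5)·t + (n−3)(n−4)(n−5), listed in increasing order t₁ < t₂ < t₃, are t₁ = −(n−3)/(2(2n−1)) − (√(5(n−3))/((2n−1)·√(2n−3)))·cos(φ/3 − π/3), t₂ = −(n−3)/(2(2n−1)) − (√(5(n−3))/((2n−1)·√(2n−3)))·cos(φ/3 + π/3), and t₃ = −(n−3)/(2(2n−1)) + (√(5(n−3))/((2n−1)·√(2n−3)))·cos(φ/3). -/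

import Mathlib

open Real

/-- The cubic `g₃(t)`. -/
noncomputable def g3 (n : ℕ) (t : ℝ) : ℝ :=
  8 * (2 * (n : ℝ) - 1) * (2 * (n : ℝ) - 3) * (2 * (n : ℝ) - 5) * t ^ 3 +
  12 * ((n : ℝ) - 3) * (2 * (n : ℝ) - 3) * (2 * (n : ℝ) - 5) * t ^ 2 +
  6 * ((n : ℝ) - 3) * ((n : ℝ) - 4) * (2 * (n : ℝ) - 5) * t +
  ((n : ℝ) - 3) * ((n : ℝ) - 4) * ((n : ℝ) - 5)

set_option maxHeartbeats 1000000 in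
theorem stmt17 (n : ℕ) (hn : 6 ≤ n) :
    (∃! φ : ℝ, φ ∈ Set.Ioo (π / 4) (π / 2) ∧
      Real.cos φ =
        (2 * (n : ℝ) - 11) * Real.sqrt (2 * (n : ℝ) - 3) /
          ((2 * (n : ℝ) - 5) * Real.sqrt (5 * ((n : ℝ) - 3))) ∧
      Real.sin φ =
        (2 * (n : ℝ) - 1) * Real.sqrt (3 * ((n : ℝ) - 4)) /
          ((2 * (n : ℝ) - 5) * Real.sqrt (5 * ((n : ℝ) - 3)))) ∧
    (∀ φ : ℝ, φ ∈ Set.Ioo (π / 4) (π / 2) →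
      Real.cos φ =
        (2 * (n : ℝ) - 11) * Real.sqrt (2 * (n : ℝ) - 3) /
          ((2 * (n : ℝ) - 5) * Real.sqrt (5 * ((n : ℝ) - 3))) →
      Real.sin φ =
        (2 * (n : ℝ) - 1) * Real.sqrt (3 * ((n : ℝ) - 4)) /
          ((2 * (n : ℝ) - 5) * Real.sqrt (5 * ((n : ℝ) - 3))) →
      ∀ t1 t2 t3 : ℝ,
        t1 = -(((n : ℝ) - 3) / (2 * (2 * (n : ℝ) - 1))) -
          Real.sqrt (5 * ((n : ℝ) - 3)) / ((2 * (n : ℝ) - 1) * Real.sqrt (2 * (n : ℝ) - 3)) *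
            Real.cos (φ / 3 - π / 3) →
        t2 = -(((n : ℝ) - 3) / (2 * (2 * (n : ℝ) - 1))) -
          Real.sqrt (5 * ((n : ℝ) - 3)) / ((2 * (n : ℝ) - 1) * Real.sqrt (2 * (n : ℝ) - 3)) *
            Real.cos (φ / 3 + π / 3) →
        t3 = -(((n : ℝ) - 3) / (2 * (2 * (n : ℝ) - 1))) +
          Real.sqrt (5 * ((n : ℝ) - 3)) / ((2 * (n : ℝ) - 1) * Real.sqrt (2 * (n : ℝ) - 3)) *
            Real.cos (φ / 3) →
        t1 < t2 ∧ t2 < t3 ∧ (∀ t : ℝ, g3 n t = 0 ↔ t = t1 ∨ t = t2 ∨ t = t3)) := by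
  have hN6 : (6:ℝ) ≤ (n:ℝ) := by exact_mod_cast hn
  set N := (n : ℝ) with hNdef
  have h1p : (0:ℝ) < 2*N-1 := by linarith
  have h3p : (0:ℝ) < 2*N-3 := by linarith
  have h5p : (0:ℝ) < 2*N-5 := by linarith
  have h11p : (0:ℝ) < 2*N-11 := by linarith
  have hn3 : (0:ℝ) < N-3 := by linarith
  have hn4 : (0:ℝ) < N-4 := by linarith
  have hπ : (0:ℝ) < π := Real.pi_pos
  set s3 := Real.sqrt (2*N-3) with hs3def
  set s5 := Real.sqrt (5*(N-3)) with hs5def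
  set s6 := Real.sqrt (3*(N-4)) with hs6def
  have hs3 : s3^2 = 2*N-3 := Real.sq_sqrt (by linarith)
  have hs5 : s5^2 = 5*(N-3) := Real.sq_sqrt (by linarith)
  have hs6 : s6^2 = 3*(N-4) := Real.sq_sqrt (by linarith)
  have hs3p : 0 < s3 := Real.sqrt_pos.mpr h3p
  have hs5p : 0 < s5 := Real.sqrt_pos.mpr (by linarith)
  have hs6p : 0 < s6 := Real.sqrt_pos.mpr (by linarith)
  have h1ne : (2*N-1) ≠ 0 := ne_of_gt h1p
  have h5ne : (2*N-5) ≠ 0 := ne_of_gt h5p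
  have hs3ne : s3 ≠ 0 := ne_of_gt hs3p
  have hs5ne : s5 ≠ 0 := ne_of_gt hs5p
  set c := (2*N-11)*s3/((2*N-5)*s5) with hcdef
  set s := (2*N-1)*s6/((2*N-5)*s5) with hsdef
  have hcpos : 0 < c := div_pos (mul_pos h11p hs3p) (mul_pos h5p hs5p)
  have hspos : 0 < s := div_pos (mul_pos h1p hs6p) (mul_pos h5p hs5p)
  have hcc : c*((2*N-5)*s5) = (2*N-11)*s3 := by
    rw [hcdef]; field_simp
  have hss : s*((2*N-5)*s5) = (2*N-1)*s6 := by
    rw [hsdef]; field_simp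
  have hc2 : (2*N-5)^2*(5*(N-3))*c^2 = (2*N-11)^2*(2*N-3) := by
    linear_combination (c*((2*N-5)*s5) + (2*N-11)*s3)*hcc + (2*N-11)^2*hs3 - c^2*(2*N-5)^2*hs5
  have hs2 : (2*N-5)^2*(5*(N-3))*s^2 = (2*N-1)^2*(3*(N-4)) := by
    linear_combination (s*((2*N-5)*s5) + (2*N-1)*s6)*hss + (2*N-1)^2*hs6 - s^2*(2*N-5)^2*hs5
  have hpos5 : (0:ℝ) < (2*N-5)^2*(5*(N-3)) := by positivity
  have hcs1 : c^2 + s^2 = 1 := by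
    have key : (2*N-5)^2*(5*(N-3))*(c^2+s^2) = (2*N-5)^2*(5*(N-3))*1 := by
      linear_combination hc2 + hs2
    exact mul_left_cancel₀ (ne_of_gt hpos5) key
  have hchalf : c^2 < 1/2 := by
    have hlt : (2*N-5)^2*(5*(N-3))*c^2 < (2*N-5)^2*(5*(N-3))*(1/2) := by
      rw [hc2]; nlinarith [sq_nonneg N, sq_nonneg (N-6)]
    exact lt_of_mul_lt_mul_left hlt (le_of_lt hpos5)
  have hc1 : c ≤ 1 := by nlinarith
  have hcm1 : (-1:ℝ) ≤ c := by linarith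
  have hclt : c < Real.sqrt 2 / 2 := by
    by_contra h
    push_neg at h
    have h2 : Real.sqrt 2 ^ 2 = 2 := Real.sq_sqrt (by norm_num)
    have h2p : 0 < Real.sqrt 2 := Real.sqrt_pos.mpr (by norm_num)
    have h3 : Real.sqrt 2/2*(Real.sqrt 2/2) ≤ c*c := mul_le_mul h h (by positivity) hcpos.le
    have h5 : Real.sqrt 2/2*(Real.sqrt 2/2) = 1/2 := by linear_combination h2/4
    have h6 : c^2 = c*c := sq c
    linarith
  refine ⟨⟨Real.arccos c, ⟨⟨?_, ?_⟩, ?_, ?_⟩, ?_⟩, ?_⟩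
  · rw [lt_iff_not_ge, Real.arccos_le_pi_div_four]
    exact not_le.mpr hclt
  · exact Real.arccos_lt_pi_div_two.mpr hcpos
  · exact Real.cos_arccos hcm1 hc1
  · rw [Real.sin_arccos]
    have h1c : 1 - c^2 = s^2 := by linarith
    rw [h1c, Real.sqrt_sq hspos.le]
  · rintro y ⟨⟨hy1, hy2⟩, hyc, -⟩
    have h0y : 0 ≤ y := by linarith
    have hyπ : y ≤ π := by linarith
    rw [← hyc, Real.arccos_cos h0y hyπ]
  -- second part
  intro φ hφ hcos hsin t1 t2 t3 ht1 ht2 ht3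
  obtain ⟨hφ1, hφ2⟩ := hφ
  set m := -((N-3)/(2*(2*N-1))) with hmdef
  set r := s5/((2*N-1)*s3) with hrdef
  set c1 := Real.cos (φ/3 - π/3) with hc1def
  set c2 := Real.cos (φ/3 + π/3) with hc2def
  set c3 := Real.cos (φ/3) with hc3def
  have hφpos : 0 < φ := by linarith
  have hrpos : 0 < r := div_pos hs5p (mul_pos h1p hs3p)
  have hc3pos : 0 < c3 := Real.cos_pos_of_mem_Ioo ⟨by linarith, by linarith⟩
  have hc2pos : 0 < c2 := Real.cos_pos_of_mem_Ioo ⟨by linarith, by linarith⟩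
  have hsφpos : 0 < Real.sin (φ/3) :=
    Real.sin_pos_of_pos_of_lt_pi (by linarith) (by linarith)
  have h3s : Real.sqrt 3 ^ 2 = 3 := Real.sq_sqrt (by norm_num)
  have h3sp : 0 < Real.sqrt 3 := Real.sqrt_pos.mpr (by norm_num)
  have hdiff : c1 - c2 = Real.sqrt 3 * Real.sin (φ/3) := by
    rw [hc1def, hc2def, Real.cos_sub, Real.cos_add, Real.sin_pi_div_three]; ring
  have pyth : Real.sin (φ/3)^2 + Real.cos (φ/3)^2 = 1 := Real.sin_sq_add_cos_sq _
  have hA : c1 + c2 = c3 := by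
    rw [hc1def, hc2def, hc3def, Real.cos_sub, Real.cos_add, Real.cos_pi_div_three]; ring
  have hE2 : c1*c2 - c1*c3 - c2*c3 = -(3/4) := by
    rw [hc1def, hc2def, hc3def, Real.cos_sub, Real.cos_add, Real.cos_pi_div_three,
      Real.sin_pi_div_three]
    linear_combination (-(3/4):ℝ)*pyth - (Real.sin (φ/3)^2/4)*h3s
  have hφ3 : Real.cos φ = 4*c3^3 - 3*c3 := by
    have h := Real.cos_three_mul (φ/3)
    rw [show 3*(φ/3) = φ from by ring] at h
    rw [hc3def]; exact h
  have hP : c1*c2*c3 = Real.cos φ / 4 := by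
    rw [hc1def, hc2def, hc3def, Real.cos_sub, Real.cos_add, Real.cos_pi_div_three,
      Real.sin_pi_div_three]
    rw [hc3def] at hφ3
    linear_combination (-(1/4):ℝ)*hφ3 - (3/4)*(Real.cos (φ/3))*pyth
      - (Real.sin (φ/3)^2*Real.cos (φ/3)/4)*h3s
  have hm : 2*(2*N-1)*m = -(N-3) := by
    rw [hmdef]; field_simp
  have hr1 : (2*N-1)*s3*r = s5 := by
    rw [hrdef]; field_simp
  have hr2 : (2*N-1)^2*(2*N-3)*r^2 = 5*(N-3) := by
    linear_combination ((2*N-1)*s3*r + s5)*hr1 - (2*N-1)^2*r^2*hs3 + hs5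
  have hrc : (2*N-5)*(s5*Real.cos φ) = (2*N-11)*s3 := by
    rw [hcos]; linear_combination hcc
  have hr3 : (2*N-1)*(2*N-5)*(r*Real.cos φ) = 2*N-11 := by
    refine mul_left_cancel₀ hs3ne ?_
    linear_combination (2*N-5)*Real.cos φ*hr1 + hrc
  -- ordering
  have h12 : t1 < t2 := by
    have hd : t2 - t1 = r*(c1 - c2) := by rw [ht1, ht2]; ring
    have : 0 < r*(c1-c2) := mul_pos hrpos (by rw [hdiff]; positivity)
    linarith
  have h23 : t2 < t3 := by
    have hd : t3 - t2 = r*(c2 + c3) := by rw [ht2, ht3]; ring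
    have : 0 < r*(c2+c3) := mul_pos hrpos (by linarith)
    linarith
  -- Vieta
  have hV1 : 2*(2*N-1)*(t1+t2+t3) = -(3*(N-3)) := by
    rw [ht1, ht2, ht3]
    linear_combination 3*hm - 2*(2*N-1)*r*hA
  have hV2 : 4*(2*N-1)^2*(2*N-3)*(t1*t2+t1*t3+t2*t3) = 3*(N-3)*(N-4)*(2*N-1) := by
    rw [ht1, ht2, ht3]
    linear_combination 3*(2*N-3)*(2*(2*N-1)*m-(N-3))*hm - 8*(2*N-1)^2*(2*N-3)*m*r*hA
      + 4*(2*N-1)^2*(2*N-3)*r^2*hE2 - 3*hr2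
  have hV3 : 8*(2*N-1)^3*(2*N-3)*(2*N-5)*(t1*t2*t3)
      = -((N-3)*(N-4)*(N-5)*(2*N-1)^2) := by
    rw [ht1, ht2, ht3]
    linear_combination ((2*N-3)*(2*N-5)*((2*(2*N-1)*m+(N-3))^2
        - 3*(N-3)*(2*(2*N-1)*m+(N-3)) + 3*(N-3)^2) - 15*(N-3)*(2*N-5))*hm
      - 8*(2*N-1)^3*(2*N-3)*(2*N-5)*m^2*r*hA
      + 8*(2*N-1)^3*(2*N-3)*(2*N-5)*m*r^2*hE2
      + 8*(2*N-1)^3*(2*N-3)*(2*N-5)*r^3*hP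
      + (2*(2*N-1)*(2*N-5)*r*Real.cos φ - 6*(2*N-1)*(2*N-5)*m)*hr2
      + 10*(N-3)*hr3
  have hfact : ∀ t : ℝ, (2*N-1)^2 * g3 n t
      = 8*(2*N-1)^3*(2*N-3)*(2*N-5)*((t-t1)*(t-t2)*(t-t3)) := by
    intro t
    simp only [g3]
    rw [← hNdef]
    linear_combination 4*(2*N-1)^2*(2*N-3)*(2*N-5)*t^2*hV1
      - 2*(2*N-1)*(2*N-5)*t*hV2 + hV3
  have hLpos : (0:ℝ) < 8*(2*N-1)^3*(2*N-3)*(2*N-5) := by positivity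
  have h1sqne : ((2*N-1)^2 : ℝ) ≠ 0 := by positivity
  refine ⟨h12, h23, fun t => ?_⟩
  have hft := hfact t
  constructor
  · intro h0
    rw [h0, mul_zero] at hft
    have hz : (t-t1)*(t-t2)*(t-t3) = 0 :=
      (mul_eq_zero.mp hft.symm).resolve_left (ne_of_gt hLpos)
    rcases mul_eq_zero.mp hz with h | h
    · rcases mul_eq_zero.mp h with h | h
      · exact Or.inl (sub_eq_zero.mp h)
      · exact Or.inr (Or.inl (sub_eq_zero.mp h))
    · exact Or.inr (Or.inr (sub_eq_zero.mp h))
  · intro h0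
    have hz : (t-t1)*(t-t2)*(t-t3) = 0 := by
      rcases h0 with rfl | rfl | rfl <;> ring
    rw [hz, mul_zero] at hft
    exact (mul_eq_zero.mp hft).resolve_left h1sqne
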